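/- arXiv:math/0311124 — 3 statements merged into one kernel-verified Lean document; each statement's English description precedes it below -/
import Mathlib

section
/- If I is a Borel-fixed monomial ideal in R = k[x_1,...,x_r] and P is an associated prime of R/I, then P = (x_1,...,x_j) for some j with 0 ≤ j ≤ r. -/
open MvPolynomial

section Helpers

variable {k : Type*} [Field k] {r : ℕ}

private lemma coeff_sum_monomial' (T : Finset (Fin r →₀ ℕ)) (c : (Fin r →₀ ℕ) → k)
    (d : Fin r →₀ ℕ) :
    coeff d (∑ e ∈ T, monomial e (c e)) = if d ∈ T then c d else 0 := by
  rw [coeff_sum]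
  simp only [coeff_monomial]
  exact Finset.sum_ite_eq' T d c

/-- Membership in a monomial ideal is characterized by divisibility of each exponent. -/
private lemma mem_span_monomials_iff (S : Set (Fin r →₀ ℕ)) (h : MvPolynomial (Fin r) k) :
    h ∈ Ideal.span ((fun J => monomial J (1 : k)) '' S) ↔
      ∀ e ∈ h.support, ∃ s ∈ S, s ≤ e := by
  classical
  constructor
  · intro hh
    let D : Ideal (MvPolynomial (Fin r) k) :=
      { carrier := {h | ∀ e ∈ h.support, ∃ s ∈ S, s ≤ e}
        zero_mem' := by simp
        add_mem' := by
          intro a b ha hb e he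
          rcases Finset.mem_union.1 (support_add he) with h' | h'
          exacts [ha e h', hb e h']
        smul_mem' := by
          intro c x hx e he
          rw [smul_eq_mul] at he
          obtain ⟨y, _, z, hz, rfl⟩ := Finset.mem_add.1 (support_mul c x he)
          obtain ⟨s, hsS, hs⟩ := hx z hz
          exact ⟨s, hsS, hs.trans (self_le_add_left _ _)⟩ }
    have hle : Ideal.span ((fun J => monomial J (1 : k)) '' S) ≤ D := by
      rw [Ideal.span_le]
      rintro _ ⟨s, hs, rfl⟩ e he
      have := support_monomial_subset he
      rw [Finset.mem_singleton] at this
      exact ⟨s, hs, this ▸ le_rfl⟩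
    exact hle hh
  · intro hh
    rw [h.as_sum]
    refine Ideal.sum_mem _ (fun e he => ?_)
    obtain ⟨s, hsS, hs⟩ := hh e he
    have : monomial e (coeff e h) = monomial s 1 * monomial (e - s) (coeff e h) := by
      rw [monomial_mul, one_mul, add_tsub_cancel_of_le hs]
    rw [this]
    exact Ideal.mul_mem_right _ _ (Ideal.subset_span ⟨s, hsS, rfl⟩)

private lemma prime_monomial_mem {P : Ideal (MvPolynomial (Fin r) k)} (hp : P.IsPrime)
    (d : Fin r →₀ ℕ) (hd : monomial d (1 : k) ∈ P) : ∃ i, 0 < d i ∧ X i ∈ P := by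
  rw [← prod_X_pow_eq_monomial] at hd
  rcases (Ideal.IsPrime.prod_mem_iff (hp := hp)).1 hd with ⟨i, hi, hXi⟩
  have hpos : 0 < d i := Nat.pos_of_ne_zero (Finsupp.mem_support_iff.1 hi)
  exact ⟨i, hpos, (hp.pow_mem_iff_mem _ hpos).1 hXi⟩

private lemma reduce_lemma (Q : (Fin r →₀ ℕ) → Prop) [DecidablePred Q]
    (I : Ideal (MvPolynomial (Fin r) k))
    (hchar : ∀ h : MvPolynomial (Fin r) k, h ∈ I ↔ ∀ e ∈ h.support, Q e)
    (F : MvPolynomial (Fin r) k) :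
    F - (∑ e ∈ F.support.filter (fun e => ¬ Q e), monomial e (F.coeff e)) ∈ I ∧
    (∑ e ∈ F.support.filter (fun e => ¬ Q e), monomial e (F.coeff e)).support
      = F.support.filter (fun e => ¬ Q e) := by
  classical
  set f₂ := ∑ e ∈ F.support.filter (fun e => ¬ Q e), monomial e (F.coeff e) with hf₂
  have hsupp : f₂.support = F.support.filter (fun e => ¬ Q e) := by
    ext d
    rw [mem_support_iff, hf₂, coeff_sum_monomial']
    constructor
    · intro hd
      by_contra hc
      simp [hc] at hd
    · intro hd
      rw [if_pos hd]
      exact mem_support_iff.1 (Finset.mem_filter.1 hd).1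
  refine ⟨?_, hsupp⟩
  have hsum : (∑ e ∈ F.support.filter Q, monomial e (F.coeff e)) + f₂ = F := by
    rw [hf₂, Finset.sum_filter_add_sum_filter_not, ← as_sum]
  have hdiff : F - f₂ = ∑ e ∈ F.support.filter Q, monomial e (F.coeff e) :=
    sub_eq_of_eq_add hsum.symm
  rw [hdiff]
  refine (hchar _).2 (fun e he => ?_)
  obtain ⟨e', he', hee⟩ := Finset.mem_biUnion.1 (MvPolynomial.support_sum he)
  have := support_monomial_subset hee
  rw [Finset.mem_singleton] at this
  subst this
  exact (Finset.mem_filter.1 he').2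

/-- Key induction: a prime of the form `I : f` with `I` monomial equals `I : m` for a monomial. -/
private lemma exists_monomial_witness
    (Q : (Fin r →₀ ℕ) → Prop) [DecidablePred Q]
    (hQmono : ∀ d e : Fin r →₀ ℕ, Q e → Q (d + e))
    (I P : Ideal (MvPolynomial (Fin r) k))
    (hchar : ∀ h : MvPolynomial (Fin r) k, h ∈ I ↔ ∀ e ∈ h.support, Q e)
    (hprime : P.IsPrime) :
    ∀ (n : ℕ) (f : MvPolynomial (Fin r) k), f.support.card ≤ n → f ≠ 0 →
      (∀ e ∈ f.support, ¬ Q e) → (∀ g, g ∈ P ↔ g * f ∈ I) →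
      ∃ m : Fin r →₀ ℕ, ¬ Q m ∧ ∀ g, g ∈ P ↔ g * monomial m (1 : k) ∈ I := by
  classical
  intro n
  induction n with
  | zero =>
    intro f hc hf _ _
    exact absurd (support_eq_empty.1 (Finset.card_eq_zero.1 (Nat.le_zero.1 hc))) hf
  | succ n ih =>
    intro f hcard hf0 hfred hPf
    by_cases hcase : ∃ d e : (Fin r →₀ ℕ), e ∈ f.support ∧ Q (d + e) ∧
        monomial d (1 : k) * f ∉ I
    · obtain ⟨d, e, he, hQde, hdf⟩ := hcase
      set F := monomial d (1 : k) * f with hF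
      obtain ⟨hFsub, hsupp2⟩ := reduce_lemma Q I hchar F
      set f₂ := ∑ e' ∈ F.support.filter (fun e' => ¬ Q e'), monomial e' (F.coeff e') with hf₂
      have hf₂0 : f₂ ≠ 0 := by
        intro h
        rw [h, sub_zero] at hFsub
        exact hdf hFsub
      have hred2 : ∀ e' ∈ f₂.support, ¬ Q e' := by
        intro e' he'
        rw [hsupp2] at he'
        exact (Finset.mem_filter.1 he').2
      -- cardinality decrease
      have hsub : F.support.filter (fun e' => ¬ Q e') ⊆
          (f.support.filter (fun e'' => ¬ Q (d + e''))).image (fun e'' => d + e'') := by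
        intro y hy
        obtain ⟨hyF, hyQ⟩ := Finset.mem_filter.1 hy
        have hcy : coeff y F ≠ 0 := mem_support_iff.1 hyF
        rw [hF, coeff_monomial_mul'] at hcy
        by_cases hdy : d ≤ y
        · rw [if_pos hdy, one_mul] at hcy
          refine Finset.mem_image.2 ⟨y - d, Finset.mem_filter.2 ⟨mem_support_iff.2 hcy, ?_⟩,
            add_tsub_cancel_of_le hdy⟩
          rwa [add_tsub_cancel_of_le hdy]
        · rw [if_neg hdy] at hcy; exact absurd rfl hcy
      have hlt : (f.support.filter (fun e'' => ¬ Q (d + e''))).card < f.support.card := by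
        refine Finset.card_lt_card (Finset.filter_ssubset.2 ⟨e, he, ?_⟩)
        simp [hQde]
      have hcard2 : f₂.support.card ≤ n := by
        have h1 := Finset.card_le_card hsub
        have h2 := Finset.card_image_le (s := f.support.filter (fun e'' => ¬ Q (d + e'')))
          (f := fun e'' => d + e'')
        rw [hsupp2]
        omega
      -- membership transfer
      have hmem2 : ∀ g, g ∈ P ↔ g * f₂ ∈ I := by
        intro g
        have hgF : g * F = g * f₂ + g * (F - f₂) := by ring
        constructor
        · intro hg
          have hgf : g * f ∈ I := (hPf g).1 hg
          have hgFI : g * F ∈ I := by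
            have : g * F = monomial d (1 : k) * (g * f) := by rw [hF]; ring
            rw [this]
            exact Ideal.mul_mem_left _ _ hgf
          have : g * f₂ = g * F - g * (F - f₂) := by rw [hgF]; ring
          rw [this]
          exact Ideal.sub_mem _ hgFI (Ideal.mul_mem_left _ _ hFsub)
        · intro hg
          have hgFI : g * F ∈ I := by
            rw [hgF]
            exact Ideal.add_mem _ hg (Ideal.mul_mem_left _ _ hFsub)
          have hgm : (g * monomial d (1 : k)) * f ∈ I := by
            have : (g * monomial d (1 : k)) * f = g * F := by rw [hF]; ring
            rw [this]; exact hgFI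
          have hgmP : g * monomial d (1 : k) ∈ P := (hPf _).2 hgm
          rcases hprime.mem_or_mem hgmP with h | h
          · exact h
          · exact absurd ((hPf _).1 h) hdf
      exact ih f₂ hcard2 hf₂0 hred2 hmem2
    · push_neg at hcase
      obtain ⟨e₀, he₀⟩ := support_nonempty.2 hf0
      refine ⟨e₀, hfred e₀ he₀, fun g => ⟨?_, ?_⟩⟩
      · -- g ∈ P → g * x^{e₀} ∈ I
        intro hg
        set T := g.support.filter (fun d => monomial d (1 : k) * f ∈ I) with hT
        set g₁ := ∑ d ∈ T, monomial d (coeff d g) with hg₁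
        have hg₁P : g₁ ∈ P := by
          refine Ideal.sum_mem _ (fun d hd => ?_)
          have hdI : monomial d (1 : k) * f ∈ I := (Finset.mem_filter.1 hd).2
          have hdP : monomial d (1 : k) ∈ P := (hPf _).2 hdI
          have : monomial d (coeff d g) = C (coeff d g) * monomial d (1 : k) := by
            rw [C_mul_monomial, mul_one]
          rw [this]
          exact Ideal.mul_mem_left _ _ hdP
        set g₂ := g - g₁ with hg₂
        have hg₂P : g₂ ∈ P := P.sub_mem hg hg₁P
        have hg₂supp : ∀ d ∈ g₂.support, d ∈ g.support ∧ monomial d (1 : k) * f ∉ I := by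
          intro d hd
          have hcd : coeff d g₂ ≠ 0 := mem_support_iff.1 hd
          rw [hg₂, coeff_sub, hg₁, coeff_sum_monomial'] at hcd
          by_cases hdT : d ∈ T
          · rw [if_pos hdT, sub_self] at hcd; exact absurd rfl hcd
          · rw [if_neg hdT, sub_zero] at hcd
            have hdg : d ∈ g.support := mem_support_iff.2 hcd
            refine ⟨hdg, fun hI => hdT ?_⟩
            exact Finset.mem_filter.2 ⟨hdg, hI⟩
        have hg₂f : g₂ * f = 0 := by
          by_contra hne
          obtain ⟨y, hy⟩ := support_nonempty.2 hne
          obtain ⟨d, hd, e', he', rfl⟩ := Finset.mem_add.1 (support_mul g₂ f hy)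
          have hQy : Q (d + e') := (hchar _).1 ((hPf g₂).1 hg₂P) _ hy
          exact (hg₂supp d hd).2 (hcase d e' he' hQy)
        have hg₂0 : g₂ = 0 := by
          rcases mul_eq_zero.1 hg₂f with h | h
          · exact h
          · exact absurd h hf0
        have hgg₁ : g = g₁ := by rw [← sub_eq_zero]; exact hg₂0
        refine (hchar _).2 (fun y hy => ?_)
        obtain ⟨d, hd, e', he', rfl⟩ := Finset.mem_add.1 (support_mul g (monomial e₀ 1) hy)
        have he'e₀ : e' = e₀ := Finset.mem_singleton.1 (support_monomial_subset he')
        have hdT : d ∈ T := by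
          have : d ∈ g₁.support := by rw [← hgg₁]; exact hd
          rw [hg₁] at this
          obtain ⟨d', hd', hdd⟩ := Finset.mem_biUnion.1 (MvPolynomial.support_sum this)
          have := Finset.mem_singleton.1 (support_monomial_subset hdd)
          exact this ▸ hd'
        have hdfI : monomial d (1 : k) * f ∈ I := (Finset.mem_filter.1 hdT).2
        have : d + e' ∈ (monomial d (1 : k) * f).support := by
          rw [mem_support_iff, coeff_monomial_mul, one_mul, he'e₀]
          exact mem_support_iff.1 he₀
        exact (hchar _).1 hdfI _ this
      · -- g * x^{e₀} ∈ I → g ∈ P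
        intro hg
        rw [g.as_sum]
        refine Ideal.sum_mem _ (fun d hd => ?_)
        have hQde₀ : Q (d + e₀) := by
          refine (hchar _).1 hg _ ?_
          rw [mem_support_iff, coeff_mul_monomial, mul_one]
          exact mem_support_iff.1 hd
        have hdI : monomial d (1 : k) * f ∈ I := hcase d e₀ he₀ hQde₀
        have hdP : monomial d (1 : k) ∈ P := (hPf _).2 hdI
        have : monomial d (coeff d g) = C (coeff d g) * monomial d (1 : k) := by
          rw [C_mul_monomial, mul_one]
        rw [this]
        exact Ideal.mul_mem_left _ _ hdP

end Helpers

/-- If `I` is a Borel-fixed monomial ideal in `R = k[x_1,...,x_r]` and `P` is an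
associated prime of `R/I`, then `P = (x_1,...,x_j)` for some `0 ≤ j ≤ r`. -/
theorem borel_fixed_associated_primes {k : Type*} [Field k] {r : ℕ}
    (I : Ideal (MvPolynomial (Fin r) k))
    (hmono : ∃ S : Set (Fin r →₀ ℕ), I = Ideal.span ((fun J => monomial J (1 : k)) '' S))
    (hborel : ∀ (J : Fin r →₀ ℕ) (a : Fin r) (ha : a.val + 1 < r),
      monomial J (1 : k) ∈ I → 0 < J ⟨a.val + 1, ha⟩ →
      monomial (J + Finsupp.single a 1 - Finsupp.single ⟨a.val + 1, ha⟩ 1) (1 : k) ∈ I)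
    (P : Ideal (MvPolynomial (Fin r) k))
    (hP : IsAssociatedPrime P (MvPolynomial (Fin r) k ⧸ I)) :
    ∃ j ≤ r, P = Ideal.span
      ((fun i => (X i : MvPolynomial (Fin r) k)) '' {i : Fin r | i.val < j}) := by
  classical
  obtain ⟨S, hIS⟩ := hmono
  set Q : (Fin r →₀ ℕ) → Prop := fun e => ∃ s ∈ S, s ≤ e with hQdef
  have memI : ∀ h : MvPolynomial (Fin r) k, h ∈ I ↔ ∀ e ∈ h.support, Q e := by
    intro h; rw [hIS]; exact mem_span_monomials_iff S h
  have hQmono : ∀ d e : Fin r →₀ ℕ, Q e → Q (d + e) := by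
    rintro d e ⟨s, hs, hle⟩
    exact ⟨s, hs, hle.trans (self_le_add_left _ _)⟩
  obtain ⟨hPprime, x, hx⟩ := (isAssociatedPrime_iff).1 hP
  obtain ⟨f₀, rfl⟩ := Ideal.Quotient.mk_surjective x
  have hmem : ∀ g, g ∈ P ↔ g * f₀ ∈ I := by
    intro g
    rw [hx, Submodule.mem_colon_singleton, Submodule.mem_bot]
    have hsm : g • (Ideal.Quotient.mk I f₀) = Ideal.Quotient.mk I (g * f₀) := rfl
    rw [hsm, Ideal.Quotient.eq_zero_iff_mem]
  have hf₀ : f₀ ∉ I := by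
    intro h
    exact hPprime.ne_top ((Ideal.eq_top_iff_one _).2 ((hmem 1).2 (by simpa using h)))
  -- reduce f₀ modulo I
  obtain ⟨hd₁, hs₁⟩ := reduce_lemma Q I memI f₀
  set f₁ := ∑ e ∈ f₀.support.filter (fun e => ¬ Q e), monomial e (f₀.coeff e) with hf₁
  have hmem₁ : ∀ g, g ∈ P ↔ g * f₁ ∈ I := by
    intro g
    rw [hmem g]
    constructor
    · intro h
      have : g * f₁ = g * f₀ - g * (f₀ - f₁) := by ring
      rw [this]
      exact Ideal.sub_mem _ h (Ideal.mul_mem_left _ _ hd₁)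
    · intro h
      have : g * f₀ = g * f₁ + g * (f₀ - f₁) := by ring
      rw [this]
      exact Ideal.add_mem _ h (Ideal.mul_mem_left _ _ hd₁)
  have hf₁0 : f₁ ≠ 0 := by
    intro h
    rw [h, sub_zero] at hd₁
    exact hf₀ hd₁
  have hred : ∀ e ∈ f₁.support, ¬ Q e := by
    intro e he
    rw [hs₁] at he
    exact (Finset.mem_filter.1 he).2
  obtain ⟨m₀, hm₀Q, hPm⟩ := exists_monomial_witness Q hQmono I P memI hPprime
    f₁.support.card f₁ le_rfl hf₁0 hred hmem₁
  -- characterization of monomials in P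
  have hXP : ∀ d : Fin r →₀ ℕ, monomial d (1 : k) ∈ P ↔ Q (d + m₀) := by
    intro d
    rw [hPm, monomial_mul, mul_one]
    constructor
    · intro h
      exact (memI _).1 h _ (by rw [mem_support_iff, coeff_monomial, if_pos rfl]; exact one_ne_zero)
    · intro h
      refine (memI _).2 (fun e he => ?_)
      have := Finset.mem_singleton.1 (support_monomial_subset he)
      exact this ▸ h
  -- Borel step: shift a variable of P down by one
  have hstep : ∀ (a : Fin r) (ha : a.val + 1 < r),
      X (⟨a.val + 1, ha⟩ : Fin r) ∈ P → X a ∈ P := by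
    intro a ha hb
    set b : Fin r := ⟨a.val + 1, ha⟩ with hbdef
    have hXb : monomial (Finsupp.single b 1 + m₀) (1 : k) ∈ I := by
      have h1 : (X b : MvPolynomial (Fin r) k) * monomial m₀ 1 ∈ I := (hPm _).1 hb
      have hXdef : (X b : MvPolynomial (Fin r) k) = monomial (Finsupp.single b 1) 1 := rfl
      rwa [hXdef, monomial_mul, one_mul] at h1
    have hpos : 0 < (Finsupp.single b 1 + m₀ : Fin r →₀ ℕ) b := by
      rw [Finsupp.add_apply, Finsupp.single_eq_same]
      omega
    have hb' := hborel (Finsupp.single b 1 + m₀) a ha hXb hpos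
    have heq : (Finsupp.single b 1 + m₀) + Finsupp.single a 1 - Finsupp.single b 1
        = Finsupp.single a 1 + m₀ := by
      ext i
      simp only [Finsupp.tsub_apply, Finsupp.add_apply, Finsupp.single_apply]
      omega
    rw [heq] at hb'
    refine (hPm _).2 ?_
    have hXdef : (X a : MvPolynomial (Fin r) k) = monomial (Finsupp.single a 1) 1 := rfl
    rwa [hXdef, monomial_mul, one_mul]
  -- downward closure
  have hdown : ∀ (n : ℕ) (a b : Fin r), a.val + n = b.val → X b ∈ P → X a ∈ P := by
    intro n
    induction n with
    | zero =>
      intro a b h hb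
      have : a = b := Fin.ext (by omega)
      rwa [this]
    | succ n ih =>
      intro a b h hb
      have ha : a.val + 1 < r := by
        have := b.isLt
        omega
      have h1 : X (⟨a.val + 1, ha⟩ : Fin r) ∈ P := ih ⟨a.val + 1, ha⟩ b (by show a.val + 1 + n = b.val; omega) hb
      exact hstep a ha h1
  -- P is generated by its variables
  have hPA : P = Ideal.span
      ((fun i => (X i : MvPolynomial (Fin r) k)) '' {i : Fin r | X i ∈ P}) := by
    apply le_antisymm
    · intro g hg
      have himg : ((fun i => (X i : MvPolynomial (Fin r) k)) '' {i : Fin r | X i ∈ P})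
          = (fun J => monomial J (1 : k)) ''
            ((fun i : Fin r => Finsupp.single i 1) '' {i : Fin r | X i ∈ P}) := by
        rw [Set.image_image]
        rfl
      rw [himg, mem_span_monomials_iff]
      intro d hd
      have hgI : g * monomial m₀ (1 : k) ∈ I := (hPm g).1 hg
      have hdm : Q (d + m₀) := by
        refine (memI _).1 hgI (d + m₀) ?_
        rw [mem_support_iff, coeff_mul_monomial, mul_one]
        exact mem_support_iff.1 hd
      have hdP : monomial d (1 : k) ∈ P := (hXP d).2 hdm
      obtain ⟨i, hipos, hiP⟩ := prime_monomial_mem hPprime d hdP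
      exact ⟨Finsupp.single i 1, ⟨i, hiP, rfl⟩, by rwa [Finsupp.single_le_iff]⟩
    · rw [Ideal.span_le]
      rintro _ ⟨i, hi, rfl⟩
      exact hi
  -- assemble: the set of variables in P is an initial segment
  set F : Finset (Fin r) := Finset.univ.filter (fun i => X i ∈ P) with hFdef
  by_cases hF : F.Nonempty
  · refine ⟨(F.max' hF).val + 1, (F.max' hF).isLt, ?_⟩
    have hset : ({i : Fin r | i.val < (F.max' hF).val + 1} : Set (Fin r))
        = {i : Fin r | X i ∈ P} := by
      ext i
      simp only [Set.mem_setOf_eq, Nat.lt_succ_iff]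
      constructor
      · intro h
        have hmax : X (F.max' hF) ∈ P := (Finset.mem_filter.1 (F.max'_mem hF)).2
        exact hdown ((F.max' hF).val - i.val) i (F.max' hF) (by omega) hmax
      · intro h
        exact F.le_max' i (Finset.mem_filter.2 ⟨Finset.mem_univ i, h⟩)
    rw [hPA, hset]
  · refine ⟨0, Nat.zero_le r, ?_⟩
    have hset : ({i : Fin r | i.val < 0} : Set (Fin r)) = {i : Fin r | X i ∈ P} := by
      ext i
      simp only [Set.mem_setOf_eq]
      constructor
      · omega
      · intro h
        exact absurd ⟨i, Finset.mem_filter.2 ⟨Finset.mem_univ i, h⟩⟩ hF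
    rw [hPA, hset]
end

section
/- Let I be a Borel-fixed monomial ideal in R = k[x_1,...,x_r] and suppose Q = (x_1,...,x_t) is a maximal associated prime of R/I. Then the images of x_{t+1},...,x_r form a maximal R/I-regular sequence in the ideal (x_1,...,x_r). -/
set_option maxHeartbeats 1600000
open MvPolynomial

section Bridge
variable {R : Type*} [CommRing R]

lemma smulTop_eq_map (I J : Ideal R) :
    (J • (⊤ : Submodule R (R ⧸ I))) = Submodule.map (Submodule.mkQ I) J := by
  conv_lhs => rw [← Submodule.range_mkQ I, ← Submodule.map_top, ← Submodule.map_smul'']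
  rw [Ideal.smul_eq_mul, Ideal.mul_top]

lemma mk_mem_smulTop_iff (I J : Ideal R) (f : R) :
    (Ideal.Quotient.mk I f) ∈ (J • (⊤ : Submodule R (R ⧸ I))) ↔ f ∈ I ⊔ J := by
  rw [smulTop_eq_map]
  constructor
  · rintro ⟨g, hg, hgf⟩
    have : f - g ∈ I := by
      rw [← Ideal.Quotient.eq_zero_iff_mem, map_sub]
      rw [Submodule.mkQ_apply, Ideal.Quotient.mk_eq_mk] at hgf
      rw [hgf]; ring
    have h2 : f = (f - g) + g := by ring
    rw [h2]; exact Submodule.add_mem_sup ‹f - g ∈ I› hg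
  · intro hf
    obtain ⟨a, ha, b, hb, rfl⟩ := Submodule.mem_sup.mp hf
    refine ⟨b, hb, ?_⟩
    rw [Submodule.mkQ_apply, Ideal.Quotient.mk_eq_mk, map_add,
      Ideal.Quotient.eq_zero_iff_mem.mpr ha, zero_add]

lemma isSMulRegular_quot_iff (I J : Ideal R) (x : R) :
    IsSMulRegular ((R ⧸ I) ⧸ (J • (⊤ : Submodule R (R ⧸ I)))) x ↔
      ∀ f : R, x * f ∈ I ⊔ J → f ∈ I ⊔ J := by
  constructor
  · intro h f hxf
    have h0 : x • (Submodule.Quotient.mk (Ideal.Quotient.mk I f) :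
        (R ⧸ I) ⧸ (J • (⊤ : Submodule R (R ⧸ I)))) = x • 0 := by
      rw [smul_zero, ← Submodule.Quotient.mk_smul]
      rw [Submodule.Quotient.mk_eq_zero]
      have : x • (Ideal.Quotient.mk I f) = Ideal.Quotient.mk I (x * f) := by
        rw [← Ideal.Quotient.mk_eq_mk, ← Submodule.Quotient.mk_smul]; rfl
      rw [this, mk_mem_smulTop_iff]; exact hxf
    have := h h0
    rw [Submodule.Quotient.mk_eq_zero] at this
    rwa [mk_mem_smulTop_iff] at this
  · intro h a b hab
    obtain ⟨a, rfl⟩ := Submodule.Quotient.mk_surjective _ a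
    obtain ⟨b, rfl⟩ := Submodule.Quotient.mk_surjective _ b
    obtain ⟨f, rfl⟩ := Ideal.Quotient.mk_surjective a
    obtain ⟨g, rfl⟩ := Ideal.Quotient.mk_surjective b
    rw [Submodule.Quotient.eq]
    simp only [← Submodule.Quotient.mk_smul] at hab
    rw [Submodule.Quotient.eq] at hab
    have heq : x • (Ideal.Quotient.mk I f) - x • (Ideal.Quotient.mk I g)
        = Ideal.Quotient.mk I (x * (f - g)) := by
      rw [mul_sub, map_sub]; rfl
    rw [heq, mk_mem_smulTop_iff] at hab
    have := h _ hab
    rw [← map_sub, mk_mem_smulTop_iff]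
    exact this

end Bridge

section Lists

lemma mem_take_drop_finRange {r t i : ℕ} {a : Fin r} :
    a ∈ ((List.finRange r).drop t).take i ↔ t ≤ a.val ∧ a.val < t + i := by
  rw [List.mem_iff_getElem]
  constructor
  · rintro ⟨j, hj, rfl⟩
    simp only [List.getElem_take, List.getElem_drop, List.getElem_finRange]
    simp only [List.length_take, List.length_drop, List.length_finRange] at hj
    simp only [Fin.cast]
    omega
  · rintro ⟨h1, h2⟩
    have hl : a.val - t < (((List.finRange r).drop t).take i).length := by
      simp only [List.length_take, List.length_drop, List.length_finRange]
      omega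
    refine ⟨a.val - t, hl, ?_⟩
    simp only [List.getElem_take, List.getElem_drop, List.getElem_finRange]
    ext; simp [Fin.cast]; omega

lemma mem_drop_finRange {r t : ℕ} {a : Fin r} :
    a ∈ (List.finRange r).drop t ↔ t ≤ a.val := by
  have h : (List.finRange r).drop t = ((List.finRange r).drop t).take (r - t) := by
    rw [List.take_of_length_le]
    simp [List.length_drop, List.length_finRange]
  rw [h, mem_take_drop_finRange]
  have := a.isLt; omega

lemma ofList_map_X {k : Type*} [CommSemiring k] {r : ℕ} (l : List (Fin r)) :
    Ideal.ofList (l.map (fun i => (X i : MvPolynomial (Fin r) k)))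
      = Ideal.span ((fun i => (X i : MvPolynomial (Fin r) k)) '' {a | a ∈ l}) := by
  unfold Ideal.ofList
  congr 1
  ext p
  simp only [Set.mem_setOf_eq, List.mem_map, Set.mem_image]

lemma span_monomial_sup_span_X {k : Type*} [CommSemiring k] {r : ℕ}
    (S : Set (Fin r →₀ ℕ)) (T : Set (Fin r)) :
    Ideal.span ((fun J => monomial J (1 : k)) '' S)
        ⊔ Ideal.span ((fun i => (X i : MvPolynomial (Fin r) k)) '' T)
      = Ideal.span ((fun J => monomial J (1 : k)) ''
          (S ∪ (fun a => Finsupp.single a 1) '' T)) := by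
  rw [← Ideal.span_union, Set.image_union, Set.image_image]
  have : ∀ a : Fin r, (X a : MvPolynomial (Fin r) k) = monomial (Finsupp.single a 1) 1 := by
    intro a; rw [← X_pow_eq_monomial, pow_one]
  simp only [this]

end Lists

section Monomials

variable {k : Type*} [Field k] {r : ℕ}

lemma mem_monomial_span_iff {S : Set (Fin r →₀ ℕ)} {J : Fin r →₀ ℕ} :
    monomial J (1:k) ∈ Ideal.span ((fun J => monomial J (1 : k)) '' S) ↔ ∃ s ∈ S, s ≤ J := by
  classical
  rw [mem_ideal_span_monomial_image, support_monomial]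
  simp

lemma bmove {I : Ideal (MvPolynomial (Fin r) k)}
    (hborel : ∀ (J : Fin r →₀ ℕ) (a : Fin r) (ha : a.val + 1 < r),
      monomial J (1 : k) ∈ I → 0 < J ⟨a.val + 1, ha⟩ →
      monomial (J + Finsupp.single a 1 - Finsupp.single ⟨a.val + 1, ha⟩ 1) (1 : k) ∈ I)
    (K : Fin r →₀ ℕ) (a : Fin r) :
    ∀ (n : ℕ) (b : Fin r), a.val ≤ b.val → b.val - a.val = n →
      monomial (K + Finsupp.single b 1) (1:k) ∈ I →
      monomial (K + Finsupp.single a 1) (1:k) ∈ I := by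
  intro n
  induction n with
  | zero =>
    intro b h1 h2 h
    have hab : a = b := Fin.ext (by omega)
    rwa [hab]
  | succ n ih =>
    intro b h1 h2 h
    have hb : 0 < b.val := by omega
    have hbr := b.isLt
    have hb'r : (b.val - 1) + 1 < r := by omega
    have hbb : (⟨(b.val - 1) + 1, hb'r⟩ : Fin r) = b := Fin.ext (by simp; omega)
    have hpos : 0 < (K + Finsupp.single b 1 : Fin r →₀ ℕ) ⟨(b.val - 1) + 1, hb'r⟩ := by
      rw [hbb]; simp [Finsupp.single_apply]
    have h2' := hborel _ ⟨b.val - 1, by omega⟩ hb'r h hpos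
    rw [hbb] at h2'
    have he : K + Finsupp.single b 1 + Finsupp.single (⟨b.val - 1, by omega⟩ : Fin r) 1
        - Finsupp.single b 1 = K + Finsupp.single (⟨b.val - 1, by omega⟩ : Fin r) 1 := by
      rw [add_right_comm, add_tsub_cancel_right]
    rw [he] at h2'
    exact ih ⟨b.val - 1, by omega⟩ (by simp; omega) (by simp; omega) h2'

end Monomials

section Push
variable {k : Type*} [Field k] {r : ℕ}

lemma push {I : Ideal (MvPolynomial (Fin r) k)}
    (hborel : ∀ (J : Fin r →₀ ℕ) (a : Fin r) (ha : a.val + 1 < r),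
      monomial J (1 : k) ∈ I → 0 < J ⟨a.val + 1, ha⟩ →
      monomial (J + Finsupp.single a 1 - Finsupp.single ⟨a.val + 1, ha⟩ 1) (1 : k) ∈ I)
    {t : ℕ} (ht : 0 < t) (htr : t ≤ r) :
    ∀ (n : ℕ) (u v : Fin r →₀ ℕ), (∀ a : Fin r, v a ≠ 0 → t ≤ a.val) →
      (∑ a : Fin r, v a * (a.val + 1 - t)) = n →
      monomial (u + v) (1:k) ∈ I →
      monomial (u + (∑ a : Fin r, v a) • Finsupp.single (⟨t-1, by omega⟩ : Fin r) 1) (1:k) ∈ I := by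
  intro n
  induction n using Nat.strong_induction_on with
  | _ n ih =>
    intro u v hv hw hm
    by_cases hv0 : v = 0
    · subst hv0
      simpa using hm
    · obtain ⟨a, ha⟩ : ∃ a, v a ≠ 0 := by
        by_contra hall; push_neg at hall
        exact hv0 (Finsupp.ext hall)
      have hat : t ≤ a.val := hv a ha
      have har := a.isLt
      have ha1 : (a.val - 1) + 1 < r := by omega
      have haa : (⟨(a.val - 1) + 1, ha1⟩ : Fin r) = a := Fin.ext (by simp; omega)
      have hpos : 0 < (u + v : Fin r →₀ ℕ) ⟨(a.val - 1) + 1, ha1⟩ := by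
        rw [haa]; simp only [Finsupp.add_apply]; omega
      have hb := hborel (u + v) ⟨a.val - 1, by omega⟩ ha1 hm hpos
      rw [haa] at hb
      set a' : Fin r := ⟨a.val - 1, by omega⟩ with ha'def
      have hsingle_le : Finsupp.single a 1 ≤ v := by
        rw [Finsupp.single_le_iff]; omega
      -- sum of a single over univ
      have hss : ∀ (c : Fin r) (f : Fin r → ℕ),
          (∑ x : Fin r, (Finsupp.single c 1 : Fin r →₀ ℕ) x * f x) = f c := by
        intro c f
        rw [Finset.sum_congr rfl (fun x _ => by
          rw [Finsupp.single_apply, ite_mul, one_mul, zero_mul])]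
        simp
      by_cases hcase : t ≤ a'.val
      · -- move within high part
        set v' : Fin r →₀ ℕ := v + Finsupp.single a' 1 - Finsupp.single a 1 with hv'def
        have hle : Finsupp.single a 1 ≤ v + Finsupp.single a' 1 :=
          le_trans hsingle_le le_self_add
        have heq : u + v + Finsupp.single a' 1 - Finsupp.single a 1 = u + v' := by
          rw [hv'def, add_assoc, add_tsub_assoc_of_le hle]
        rw [heq] at hb
        have hvv : v' + Finsupp.single a 1 = v + Finsupp.single a' 1 :=
          tsub_add_cancel_of_le hle
        have happly : ∀ c, v' c + (Finsupp.single a 1 : Fin r →₀ ℕ) c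
            = v c + (Finsupp.single a' 1 : Fin r →₀ ℕ) c := by
          intro c; rw [← Finsupp.add_apply, ← Finsupp.add_apply, hvv]
        have hv'high : ∀ c : Fin r, v' c ≠ 0 → t ≤ c.val := by
          intro c hc
          by_contra hct
          have h1 : c ≠ a' := by intro h; rw [h] at hct; omega
          have h2 : c ≠ a := by intro h; rw [h] at hct; omega
          have := happly c
          rw [Finsupp.single_apply, Finsupp.single_apply, if_neg (fun h => h2 h.symm),
            if_neg (fun h => h1 h.symm)] at this
          have hvc : v c = 0 := by
            by_contra hvc; exact hct (hv c hvc)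
          omega
        have e1 : (∑ x : Fin r, (Finsupp.single a 1 : Fin r →₀ ℕ) x) = 1 := by
          simpa using hss a (fun _ => 1)
        have e1' : (∑ x : Fin r, (Finsupp.single a' 1 : Fin r →₀ ℕ) x) = 1 := by
          simpa using hss a' (fun _ => 1)
        have h1 : (∑ c : Fin r, v' c) + (∑ x : Fin r, (Finsupp.single a 1 : Fin r →₀ ℕ) x)
            = (∑ c : Fin r, v c) + (∑ x : Fin r, (Finsupp.single a' 1 : Fin r →₀ ℕ) x) := by
          rw [← Finset.sum_add_distrib, ← Finset.sum_add_distrib]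
          exact Finset.sum_congr rfl (fun c _ => happly c)
        rw [e1, e1'] at h1
        have hsum : (∑ c : Fin r, v' c) = ∑ c : Fin r, v c := by omega
        have h2 : (∑ c : Fin r, v' c * (c.val + 1 - t)) + (a.val + 1 - t)
            = (∑ c : Fin r, v c * (c.val + 1 - t)) + (a'.val + 1 - t) := by
          have := hss a (fun c => c.val + 1 - t)
          have := hss a' (fun c => c.val + 1 - t)
          calc (∑ c : Fin r, v' c * (c.val + 1 - t)) + (a.val + 1 - t)
              = ∑ c : Fin r, (v' c + (Finsupp.single a 1 : Fin r →₀ ℕ) c) * (c.val + 1 - t) := by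
                rw [Finset.sum_congr rfl (fun c _ => add_mul _ _ _), Finset.sum_add_distrib,
                  hss a (fun c => c.val + 1 - t)]
            _ = ∑ c : Fin r, (v c + (Finsupp.single a' 1 : Fin r →₀ ℕ) c) * (c.val + 1 - t) :=
                Finset.sum_congr rfl (fun c _ => by rw [happly c])
            _ = (∑ c : Fin r, v c * (c.val + 1 - t)) + (a'.val + 1 - t) := by
                rw [Finset.sum_congr rfl (fun c _ => add_mul _ _ _), Finset.sum_add_distrib,
                  hss a' (fun c => c.val + 1 - t)]
        have ha'v : a'.val = a.val - 1 := rfl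
        have hn1 : (∑ c : Fin r, v' c * (c.val + 1 - t)) = n - 1 ∧ 1 ≤ n := by
          rw [hw] at h2; omega
        have := ih (n - 1) (by omega) u v' hv'high hn1.1 hb
        rwa [hsum] at this
      · -- the moved exponent lands at position t-1
        have hat' : a.val = t := by simp only [ha'def] at hcase; omega
        have haτ : a' = (⟨t - 1, by omega⟩ : Fin r) := Fin.ext (by simp [ha'def]; omega)
        set v' : Fin r →₀ ℕ := v - Finsupp.single a 1 with hv'def
        have heq : u + v + Finsupp.single a' 1 - Finsupp.single a 1
            = (u + Finsupp.single a' 1) + v' := by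
          rw [add_right_comm, add_tsub_assoc_of_le hsingle_le]
        rw [heq] at hb
        have hvv : v' + Finsupp.single a 1 = v := tsub_add_cancel_of_le hsingle_le
        have happly : ∀ c, v' c + (Finsupp.single a 1 : Fin r →₀ ℕ) c = v c := by
          intro c; rw [← Finsupp.add_apply, hvv]
        have hv'high : ∀ c : Fin r, v' c ≠ 0 → t ≤ c.val := by
          intro c hc
          apply hv c
          have := happly c
          omega
        have e1 : (∑ x : Fin r, (Finsupp.single a 1 : Fin r →₀ ℕ) x) = 1 := by
          simpa using hss a (fun _ => 1)
        have h1 : (∑ c : Fin r, v' c) + 1 = (∑ c : Fin r, v c) := by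
          rw [← e1, ← Finset.sum_add_distrib]
          exact Finset.sum_congr rfl (fun c _ => happly c)
        have h2 : (∑ c : Fin r, v' c * (c.val + 1 - t)) + (a.val + 1 - t)
            = ∑ c : Fin r, v c * (c.val + 1 - t) := by
          calc (∑ c : Fin r, v' c * (c.val + 1 - t)) + (a.val + 1 - t)
              = ∑ c : Fin r, (v' c + (Finsupp.single a 1 : Fin r →₀ ℕ) c) * (c.val + 1 - t) := by
                rw [Finset.sum_congr rfl (fun c _ => add_mul _ _ _), Finset.sum_add_distrib,
                  hss a (fun c => c.val + 1 - t)]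
            _ = ∑ c : Fin r, v c * (c.val + 1 - t) :=
                Finset.sum_congr rfl (fun c _ => by rw [happly c])
        have hn1 : (∑ c : Fin r, v' c * (c.val + 1 - t)) = n - 1 ∧ 1 ≤ n := by
          rw [hw] at h2; omega
        have hind := ih (n - 1) (by omega) (u + Finsupp.single a' 1) v' hv'high hn1.1 hb
        have hfinal : u + (∑ c : Fin r, v c) • Finsupp.single (⟨t-1, by omega⟩ : Fin r) 1
            = (u + Finsupp.single a' 1)
              + (∑ c : Fin r, v' c) • Finsupp.single (⟨t-1, by omega⟩ : Fin r) 1 := by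
          ext c
          simp only [Finsupp.add_apply, Finsupp.smul_apply, smul_eq_mul,
            Finsupp.single_apply, Fin.ext_iff, ha'def, Fin.val_mk]
          split_ifs <;> omega
        rwa [hfinal]

end Push

/-- If `I` is a Borel-fixed monomial ideal and `Q = (x_1,...,x_t)` is a maximal
associated prime of `R/I`, then `x_{t+1},...,x_r` form a maximal `R/I`-regular sequence inside
the maximal ideal `(x_1,...,x_r)`. -/
theorem borel_fixed_maximal_regular_sequence {k : Type*} [Field k] {r : ℕ}
    (I : Ideal (MvPolynomial (Fin r) k))
    (hmono : ∃ S : Set (Fin r →₀ ℕ), I = Ideal.span ((fun J => monomial J (1 : k)) '' S))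
    (hborel : ∀ (J : Fin r →₀ ℕ) (a : Fin r) (ha : a.val + 1 < r),
      monomial J (1 : k) ∈ I → 0 < J ⟨a.val + 1, ha⟩ →
      monomial (J + Finsupp.single a 1 - Finsupp.single ⟨a.val + 1, ha⟩ 1) (1 : k) ∈ I)
    (t : ℕ) (ht : t ≤ r)
    (hQ : IsAssociatedPrime
      (Ideal.span ((fun i => (X i : MvPolynomial (Fin r) k)) '' {i : Fin r | i.val < t}))
      (MvPolynomial (Fin r) k ⧸ I))
    (hQmax : ∀ Q, IsAssociatedPrime Q (MvPolynomial (Fin r) k ⧸ I) →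
      Ideal.span ((fun i => (X i : MvPolynomial (Fin r) k)) '' {i : Fin r | i.val < t}) ≤ Q →
      Q = Ideal.span ((fun i => (X i : MvPolynomial (Fin r) k)) '' {i : Fin r | i.val < t})) :
    RingTheory.Sequence.IsRegular (MvPolynomial (Fin r) k ⧸ I)
        (((List.finRange r).drop t).map (fun i => (X i : MvPolynomial (Fin r) k))) ∧
      ∀ y ∈ Ideal.span (Set.range (X : Fin r → MvPolynomial (Fin r) k)),
        ¬ RingTheory.Sequence.IsRegular (MvPolynomial (Fin r) k ⧸ I)
          ((((List.finRange r).drop t).map (fun i => (X i : MvPolynomial (Fin r) k))) ++ [y]) := by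
  classical
  obtain ⟨S, rfl⟩ := hmono
  set I : Ideal (MvPolynomial (Fin r) k) :=
    Ideal.span ((fun J => monomial J (1 : k)) '' S) with hIdef
  set Q : Ideal (MvPolynomial (Fin r) k) :=
    Ideal.span ((fun i => (X i : MvPolynomial (Fin r) k)) '' {i : Fin r | i.val < t}) with hQdef
  set xs : List (MvPolynomial (Fin r) k) :=
    ((List.finRange r).drop t).map (fun i => (X i : MvPolynomial (Fin r) k)) with hxsdef
  -- the big monomial ideals with extra variables
  set Ic : ℕ → Ideal (MvPolynomial (Fin r) k) := fun c =>
    Ideal.span ((fun J => monomial J (1 : k)) ''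
      (S ∪ (fun a => Finsupp.single a 1) '' {a : Fin r | t ≤ a.val ∧ a.val < c})) with hIcdef
  -- basic data from hQ
  obtain ⟨hQprime, x, hxQ⟩ := isAssociatedPrime_iff.mp hQ
  obtain ⟨f₀, rfl⟩ := Ideal.Quotient.mk_surjective x
  have hf₀I : f₀ ∉ I := by
    intro hf
    have h0 : Ideal.Quotient.mk I f₀ = 0 := Ideal.Quotient.eq_zero_iff_mem.mpr hf
    rw [h0] at hxQ
    exact hQprime.ne_top (hxQ.trans (eq_top_iff.mpr fun r _ => Submodule.mem_colon_singleton.mpr (by simp)))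
  have memI : ∀ J : Fin r →₀ ℕ, monomial J (1:k) ∈ I ↔ ∃ s ∈ S, s ≤ J :=
    fun J => mem_monomial_span_iff
  have hXmul : ∀ (i : Fin r) (m : Fin r →₀ ℕ),
      (X i : MvPolynomial (Fin r) k) * monomial m (1:k)
        = monomial (m + Finsupp.single i 1) (1:k) := by
    intro i m
    rw [add_comm, monomial_single_add, pow_one]
  have hXnotQ : ∀ j : Fin r, t ≤ j.val → (X j : MvPolynomial (Fin r) k) ∉ Q := by
    intro j hj hmem
    rw [hQdef] at hmem
    have himg : ((fun i => (X i : MvPolynomial (Fin r) k)) '' {i : Fin r | i.val < t})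
        = X '' {i : Fin r | i.val < t} := rfl
    rw [himg, mem_ideal_span_X_image] at hmem
    obtain ⟨i, hi, hne⟩ := hmem (Finsupp.single j 1) (by rw [support_X]; simp)
    rw [Finsupp.single_apply] at hne
    by_cases h : j = i
    · subst h; exact absurd hi (by simp; omega)
    · exact hne (if_neg h)
  -- smul on the quotient
  have hsmulmk : ∀ (p q : MvPolynomial (Fin r) k),
      p • (Ideal.Quotient.mk I q) = Ideal.Quotient.mk I (p * q) := by
    intro p q
    rw [← Ideal.Quotient.mk_eq_mk, ← Submodule.Quotient.mk_smul]; rfl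
  -- the key Borel + maximality argument
  have coreA : ∀ (j : Fin r), t ≤ j.val → ∀ f : MvPolynomial (Fin r) k,
      X j * f ∈ Ic j.val → f ∈ Ic j.val := by
    intro j hj f hf
    rw [hIcdef] at hf ⊢
    rw [mem_ideal_span_monomial_image] at hf ⊢
    intro m hm
    have hmem : Finsupp.single j 1 + m ∈ (X j * f).support := by
      rw [support_X_mul]
      exact Finset.mem_map.mpr ⟨m, hm, rfl⟩
    obtain ⟨s, hsS, hle⟩ := hf _ hmem
    by_cases hlow : ∃ a : Fin r, t ≤ a.val ∧ a.val < j.val ∧ m a ≠ 0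
    · obtain ⟨a, ha1, ha2, ha3⟩ := hlow
      exact ⟨Finsupp.single a 1, Or.inr ⟨a, ⟨ha1, ha2⟩, rfl⟩,
        Finsupp.single_le_iff.mpr (by omega)⟩
    · push_neg at hlow
      have hsS' : s ∈ S := by
        rcases hsS with h | ⟨a, ⟨hat, haj⟩, rfl⟩
        · exact h
        · exfalso
          have hl := Finsupp.single_le_iff.mp hle
          have hane : j ≠ a := by intro h; rw [← h] at hat; omega
          rw [Finsupp.add_apply, Finsupp.single_apply, if_neg hane] at hl
          exact absurd (hlow a hat haj) (by omega)
      have hmj : monomial (m + Finsupp.single j 1) (1:k) ∈ I :=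
        (memI _).mpr ⟨s, hsS', by rwa [add_comm] at hle⟩
      by_cases hmI : monomial m (1:k) ∈ I
      · obtain ⟨s', hs', hles'⟩ := (memI _).mp hmI
        exact ⟨s', Or.inl hs', hles'⟩
      · exfalso
        set z := Ideal.Quotient.mk I (monomial m (1:k)) with hzdef
        have hz : z ≠ 0 := fun h => hmI (Ideal.Quotient.eq_zero_iff_mem.mp h)
        have hzann : ∀ i : Fin r, i.val ≤ j.val →
            monomial (m + Finsupp.single i 1) (1:k) ∈ I := by
          intro i hi
          exact bmove hborel m i (j.val - i.val) j hi rfl hmj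
        obtain ⟨P, hP, hPle⟩ :=
          exists_le_isAssociatedPrime_of_isNoetherianRing (MvPolynomial (Fin r) k) z hz
        have hQleP : Q ≤ P := by
          rw [hQdef, Ideal.span_le]
          rintro _ ⟨i, hi, rfl⟩
          apply hPle
          rw [Submodule.mem_colon_singleton, Submodule.mem_bot, hzdef, hsmulmk, hXmul,
            Ideal.Quotient.eq_zero_iff_mem]
          exact hzann i (by simp only [Set.mem_setOf_eq] at hi; omega)
        have hPQ := hQmax P hP hQleP
        have hXjP : (X j : MvPolynomial (Fin r) k) ∈ P := by
          apply hPle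
          rw [Submodule.mem_colon_singleton, Submodule.mem_bot, hzdef, hsmulmk, hXmul,
            Ideal.Quotient.eq_zero_iff_mem]
          exact hzann j le_rfl
        rw [hPQ] at hXjP
        exact hXnotQ j hj hXjP
  -- identification of the sup ideals
  have hxslen : xs.length = r - t := by
    rw [hxsdef]
    simp [List.length_map, List.length_drop, List.length_finRange]
  have htake : ∀ i : ℕ, I ⊔ Ideal.ofList (xs.take i) = Ic (t + i) := by
    intro i
    rw [hxsdef, ← List.map_take, ofList_map_X, hIdef, span_monomial_sup_span_X, hIcdef]
    have hset : {a : Fin r | a ∈ ((List.finRange r).drop t).take i}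
        = {a : Fin r | t ≤ a.val ∧ a.val < t + i} := by
      ext a; exact mem_take_drop_finRange
    rw [hset]
  have hfull : I ⊔ Ideal.ofList xs = Ic r := by
    rw [hxsdef, ofList_map_X, hIdef, span_monomial_sup_span_X, hIcdef]
    have hset : {a : Fin r | a ∈ (List.finRange r).drop t}
        = {a : Fin r | t ≤ a.val ∧ a.val < r} := by
      ext a
      rw [Set.mem_setOf_eq, Set.mem_setOf_eq, mem_drop_finRange]
      have := a.isLt; omega
    rw [hset]
  -- find a monomial with annihilator containing Q
  have hf' : ¬ ∀ m ∈ f₀.support, ∃ s ∈ S, s ≤ m := by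
    intro h
    exact hf₀I (by rw [hIdef]; exact mem_ideal_span_monomial_image.mpr h)
  push_neg at hf'
  obtain ⟨m₀, hm₀supp, hm₀bad⟩ := hf'
  have hm₀ann : ∀ i : Fin r, i.val < t → monomial (m₀ + Finsupp.single i 1) (1:k) ∈ I := by
    intro i hi
    have hXiQ : (X i : MvPolynomial (Fin r) k) ∈ Q := by
      rw [hQdef]; exact Ideal.subset_span ⟨i, hi, rfl⟩
    rw [hxQ, Submodule.mem_colon_singleton, Submodule.mem_bot, hsmulmk,
      Ideal.Quotient.eq_zero_iff_mem] at hXiQ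
    rw [hIdef] at hXiQ
    have hsupp : Finsupp.single i 1 + m₀ ∈ (X i * f₀).support := by
      rw [support_X_mul]; exact Finset.mem_map.mpr ⟨m₀, hm₀supp, rfl⟩
    obtain ⟨s, hs, hle⟩ := mem_ideal_span_monomial_image.mp hXiQ _ hsupp
    exact (memI _).mpr ⟨s, hs, by rwa [add_comm] at hle⟩
  -- the general "socle element" criterion
  have claim : ∀ w : Fin r →₀ ℕ, (∀ c : Fin r, w c ≠ 0 → c.val < t) →
      monomial w (1:k) ∉ I →
      (∀ i : Fin r, i.val < t → monomial (w + Finsupp.single i 1) (1:k) ∈ I) →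
      monomial w (1:k) ∉ Ic r ∧ ∀ i : Fin r, X i * monomial w (1:k) ∈ Ic r := by
    intro w hwlow hwI hwann
    constructor
    · intro hmem
      rw [hIcdef] at hmem
      obtain ⟨s, hsS, hle⟩ := mem_monomial_span_iff.mp hmem
      rcases hsS with h | ⟨a, ⟨hat, _⟩, rfl⟩
      · exact hwI ((memI _).mpr ⟨s, h, hle⟩)
      · have h1 := Finsupp.single_le_iff.mp hle
        have h2 : w a ≠ 0 := by omega
        have := hwlow a h2
        omega
    · intro i
      rw [hXmul]
      by_cases hi : i.val < t
      · obtain ⟨s, hs, hle⟩ := (memI _).mp (hwann i hi)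
        rw [hIcdef]
        exact mem_monomial_span_iff.mpr ⟨s, Or.inl hs, hle⟩
      · rw [hIcdef]
        refine mem_monomial_span_iff.mpr ⟨Finsupp.single i 1,
          Or.inr ⟨i, ⟨by omega, i.isLt⟩, rfl⟩, Finsupp.single_le_iff.mpr ?_⟩
        simp [Finsupp.add_apply, Finsupp.single_apply]
  -- construct the socle monomial m₃
  obtain ⟨m₃, hm₃notI, hm₃mul⟩ : ∃ w : Fin r →₀ ℕ,
      monomial w (1:k) ∉ Ic r ∧ ∀ i : Fin r, X i * monomial w (1:k) ∈ Ic r := by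
    by_cases ht0 : t = 0
    · refine ⟨0, claim 0 (by simp) ?_ (by intro i hi; omega) |>.1,
        (claim 0 (by simp) ?_ (by intro i hi; omega)).2⟩ <;>
      · intro h
        obtain ⟨s, hs, hle⟩ := (memI _).mp h
        have hs0 : s = 0 := by
          ext c
          have := Finsupp.le_def.mp hle c
          simp only [Finsupp.coe_zero, Pi.zero_apply] at this ⊢
          omega
        subst hs0
        exact hm₀bad 0 hs zero_le
    · have htpos : 0 < t := Nat.pos_of_ne_zero ht0
      set τ : Fin r := ⟨t - 1, by omega⟩ with hτdef
      set u : Fin r →₀ ℕ := m₀.filter (fun a : Fin r => a.val < t) with hudef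
      set v : Fin r →₀ ℕ := m₀.filter (fun a : Fin r => ¬ a.val < t) with hvdef
      have hufilter : ∀ c : Fin r, u c = if c.val < t then m₀ c else 0 := by
        intro c; rw [hudef, Finsupp.filter_apply]
      have hvfilter : ∀ c : Fin r, v c = if ¬ c.val < t then m₀ c else 0 := by
        intro c; rw [hvdef, Finsupp.filter_apply]
      have huv : u + v = m₀ := by
        ext c
        rw [Finsupp.add_apply, hufilter, hvfilter]
        split_ifs <;> omega
      have hulow : ∀ c : Fin r, u c ≠ 0 → c.val < t := by
        intro c hc; rw [hufilter] at hc
        by_contra h; rw [if_neg h] at hc; exact hc rfl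
      have hvhigh : ∀ c : Fin r, v c ≠ 0 → t ≤ c.val := by
        intro c hc; rw [hvfilter] at hc
        by_contra h; push_neg at h
        rw [if_neg (by omega)] at hc; exact hc rfl
      set d : ℕ := ∑ c : Fin r, v c with hddef
      have hpush : ∀ i : Fin r, i.val < t →
          monomial ((u + Finsupp.single i 1) + d • Finsupp.single τ 1) (1:k) ∈ I := by
        intro i hi
        have heq : (u + Finsupp.single i 1) + v = m₀ + Finsupp.single i 1 := by
          rw [add_right_comm, huv]
        exact push hborel htpos ht (∑ c : Fin r, v c * (c.val + 1 - t))
          (u + Finsupp.single i 1) v hvhigh rfl (by rw [heq]; exact hm₀ann i hi)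
      have huI : monomial u (1:k) ∉ I := by
        intro h
        obtain ⟨s, hs, hle⟩ := (memI _).mp h
        refine hm₀bad s hs (le_trans hle ?_)
        rw [Finsupp.le_def]
        intro c
        rw [hufilter]; split_ifs <;> omega
      have hwlowgen : ∀ n : ℕ, ∀ c : Fin r,
          (u + n • Finsupp.single τ 1 : Fin r →₀ ℕ) c ≠ 0 → c.val < t := by
        intro n c hc
        rw [Finsupp.add_apply] at hc
        by_cases h : u c ≠ 0
        · exact hulow c h
        · push_neg at h
          rw [h, zero_add, Finsupp.smul_apply, Finsupp.single_apply] at hc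
          by_cases hτc : τ = c
          · rw [← hτc]; simp only [hτdef]; omega
          · rw [if_neg hτc] at hc; simp at hc
      by_cases hPd : monomial (u + d • Finsupp.single τ 1) (1:k) ∈ I
      · have hex : ∃ n : ℕ, monomial (u + n • Finsupp.single τ 1) (1:k) ∈ I := ⟨d, hPd⟩
        have he₀pos : Nat.find hex ≠ 0 := by
          intro h
          have hspec := Nat.find_spec hex
          rw [h] at hspec
          simp only [zero_smul, add_zero] at hspec
          exact huI hspec
        set e : ℕ := Nat.find hex - 1 with hedef
        have hPe : monomial (u + e • Finsupp.single τ 1) (1:k) ∉ I :=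
          Nat.find_min hex (by omega)
        have hPe1 : monomial (u + (e+1) • Finsupp.single τ 1) (1:k) ∈ I := by
          have he1 : e + 1 = Nat.find hex := by omega
          rw [he1]; exact Nat.find_spec hex
        refine ⟨u + e • Finsupp.single τ 1,
          claim _ (hwlowgen e) hPe ?_⟩
        intro i hi
        have hττ : monomial ((u + e • Finsupp.single τ 1) + Finsupp.single τ 1) (1:k) ∈ I := by
          rw [add_assoc, ← succ_nsmul]; exact hPe1
        exact bmove hborel _ i (τ.val - i.val) τ (by simp only [hτdef]; omega) rfl hττ
      · refine ⟨u + d • Finsupp.single τ 1,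
          claim _ (hwlowgen d) hPd ?_⟩
        intro i hi
        have heq : (u + d • Finsupp.single τ 1) + Finsupp.single i 1
            = (u + Finsupp.single i 1) + d • Finsupp.single τ 1 := by
          rw [add_right_comm]
        rw [heq]
        exact hpush i hi
  -- assembling the two parts
  constructor
  · refine ⟨⟨?_⟩, ?_⟩
    · intro i hlen
      rw [hxslen] at hlen
      have hti : t + i < r := by omega
      have hgetel : xs[i]'(by rw [hxslen]; omega) = X (⟨t + i, hti⟩ : Fin r) := by
        show (((List.finRange r).drop t).map (fun i => (X i : MvPolynomial (Fin r) k)))[i]'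
            (by simp only [List.length_map, List.length_drop, List.length_finRange]; omega) =
          X (⟨t + i, hti⟩ : Fin r)
        simp only [List.getElem_map, List.getElem_drop, List.getElem_finRange]
        congr 1
      rw [isSMulRegular_quot_iff, htake i, hgetel]
      exact coreA ⟨t + i, hti⟩ (by simp)
    · intro heq
      have h1 : Ideal.Quotient.mk I 1 ∈ (Ideal.ofList xs • (⊤ :
          Submodule (MvPolynomial (Fin r) k) (MvPolynomial (Fin r) k ⧸ I))) := by
        rw [← heq]; trivial
      rw [mk_mem_smulTop_iff, hfull] at h1
      have htop : Ic r = ⊤ := Ideal.eq_top_iff_one _ |>.mpr h1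
      exact hm₃notI (htop ▸ trivial)
  · intro y hy hreg
    have hlen2 : r - t < (xs ++ [y]).length := by
      rw [List.length_append, hxslen]; simp
    have hreg' := hreg.toIsWeaklyRegular.regular_mod_prev (r - t) hlen2
    have htake2 : (xs ++ [y]).take (r - t) = xs := by
      rw [← hxslen]; exact List.take_left (l₁ := xs) (l₂ := [y])
    have hget2 : (xs ++ [y])[r - t]'hlen2 = y := by
      rw [List.getElem_append_right (by rw [hxslen])]
      simp [hxslen]
    rw [htake2, hget2, isSMulRegular_quot_iff, hfull] at hreg'
    have hymul : ∀ y', y' ∈ Ideal.span (Set.range (X : Fin r → MvPolynomial (Fin r) k)) →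
        y' * monomial m₃ (1:k) ∈ Ic r := by
      intro y' hy'
      induction hy' using Submodule.span_induction with
      | mem p hp => obtain ⟨i, rfl⟩ := hp; exact hm₃mul i
      | zero => simp
      | add a b ha hb iha ihb => rw [add_mul]; exact Ideal.add_mem _ iha ihb
      | smul c a ha iha => rw [smul_mul_assoc]; exact Submodule.smul_mem _ c iha
    exact hm₃notI (hreg' _ (hymul y hy))
end

section
/- Let P be a homogeneous prime ideal in R = k[x_1,...,x_r], and fix the reverse lexicographic order with x_1 > ... > x_r. If x_r ∉ P, then the image of x_r in R/in(P) is a non-zerodivisor; in particular x_r lies in no associated prime of R/in(P). -/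
open MvPolynomial

attribute [local instance] MvPolynomial.gradedAlgebra

/-- The leading exponent (multidegree) of a polynomial w.r.t. a monomial order. -/
noncomputable def MonomialOrder.leadExp {k : Type*} [Field k] {r : ℕ}
    (m : MonomialOrder (Fin r)) (f : MvPolynomial (Fin r) k) : Fin r →₀ ℕ :=
  m.toSyn.symm (f.support.sup fun d => m.toSyn d)

/-- The initial ideal of `P` w.r.t. a monomial order: the ideal generated by the leading
monomials of the nonzero elements of `P`. -/
noncomputable def MonomialOrder.initialIdeal {k : Type*} [Field k] {r : ℕ}
    (m : MonomialOrder (Fin r)) (P : Ideal (MvPolynomial (Fin r) k)) :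
    Ideal (MvPolynomial (Fin r) k) :=
  Ideal.span ((fun f => monomial (m.leadExp f) (1 : k)) '' {f | f ∈ P ∧ f ≠ 0})


/-- `a` is smaller than `b` in the (graded) reverse lexicographic order: either `a` has smaller
total degree, or the degrees agree and at the last index where they differ, `a` has the
*larger* exponent. -/
def RevLexLt {r : ℕ} (a b : Fin r →₀ ℕ) : Prop :=
  (∑ i, a i) < (∑ i, b i) ∨
    ((∑ i, a i) = (∑ i, b i) ∧ ∃ i : Fin r, b i < a i ∧ ∀ j : Fin r, i < j → a j = b j)

namespace BayerStillmanAux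

variable {k : Type*} [Field k] {r : ℕ} (m : MonomialOrder (Fin r))

lemma toSyn_leadExp (f : MvPolynomial (Fin r) k) :
    m.toSyn (m.leadExp f) = f.support.sup fun d => m.toSyn d := by
  simp [MonomialOrder.leadExp]

lemma leadExp_mem {f : MvPolynomial (Fin r) k} (hf : f ≠ 0) : m.leadExp f ∈ f.support := by
  obtain ⟨b, hb, hsup⟩ := Finset.exists_mem_eq_sup f.support
    (MvPolynomial.support_nonempty.mpr hf) (fun d => m.toSyn d)
  have hb' : m.leadExp f = b := by
    rw [MonomialOrder.leadExp, hsup, AddEquiv.symm_apply_apply]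
  rwa [hb']

lemma le_leadExp {f : MvPolynomial (Fin r) k} {d} (hd : d ∈ f.support) :
    m.toSyn d ≤ m.toSyn (m.leadExp f) := by
  rw [toSyn_leadExp]; exact Finset.le_sup hd

lemma coeff_leadExp_ne_zero {f : MvPolynomial (Fin r) k} (hf : f ≠ 0) :
    f.coeff (m.leadExp f) ≠ 0 := MvPolynomial.mem_support_iff.mp (leadExp_mem m hf)

lemma leadExp_X_mul (i : Fin r) {f : MvPolynomial (Fin r) k} (hf : f ≠ 0) :
    m.leadExp (X i * f) = Finsupp.single i 1 + m.leadExp f := by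
  classical
  have hmem : Finsupp.single i 1 + m.leadExp f ∈ (X i * f).support := by
    rw [MvPolynomial.mem_support_iff, MvPolynomial.coeff_X_mul]
    exact coeff_leadExp_ne_zero m hf
  apply m.toSyn.injective
  apply le_antisymm
  · rw [toSyn_leadExp]
    apply Finset.sup_le
    intro d hd
    rw [MvPolynomial.mem_support_iff] at hd
    have hXf : (X i * f : MvPolynomial (Fin r) k) = monomial (Finsupp.single i 1) 1 * f := by
      rw [MvPolynomial.X]
    rw [hXf, MvPolynomial.coeff_monomial_mul'] at hd
    by_cases hle : Finsupp.single i 1 ≤ d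
    · rw [if_pos hle, one_mul] at hd
      have hmem' : d - Finsupp.single i 1 ∈ f.support := MvPolynomial.mem_support_iff.mpr hd
      have h1 : m.toSyn (d - Finsupp.single i 1) ≤ m.toSyn (m.leadExp f) := le_leadExp m hmem'
      have hd' : d = Finsupp.single i 1 + (d - Finsupp.single i 1) := by
        rw [add_comm, tsub_add_cancel_of_le hle]
      rw [hd', map_add, map_add]
      exact add_le_add (le_refl _) h1
    · rw [if_neg hle] at hd
      exact absurd rfl hd
  · exact le_leadExp m hmem

lemma X_mul_div (x : Fin r) {g : MvPolynomial (Fin r) k}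
    (hsup : ∀ a ∈ g.support, a x ≠ 0) :
    g = X x * (g.divMonomial (Finsupp.single x 1)) := by
  have hmod : g.modMonomial (Finsupp.single x 1) = 0 := by
    ext s
    rw [MvPolynomial.coeff_zero]
    by_cases h : Finsupp.single x 1 ≤ s
    · exact MvPolynomial.coeff_modMonomial_of_le g h
    · rw [MvPolynomial.coeff_modMonomial_of_not_le g h]
      by_contra hne
      have hs : s ∈ g.support := MvPolynomial.mem_support_iff.mpr hne
      have := hsup s hs
      rw [Finsupp.single_le_iff] at h
      omega
  conv_lhs => rw [← MvPolynomial.modMonomial_add_divMonomial_single g x, hmod, zero_add]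

end BayerStillmanAux

open BayerStillmanAux

/-- Bayer–Stillman: for the reverse lexicographic order, if `P` is a homogeneous
prime with `x_r ∉ P`, then the image of `x_r` in `R/in(P)` is a non-zerodivisor; in particular
`x_r` lies in no associated prime of `R/in(P)`. -/
theorem last_variable_nonzerodivisor_revlex {k : Type*} [Field k] {r : ℕ} (hr : 0 < r)
    (P : Ideal (MvPolynomial (Fin r) k)) (hP : P.IsPrime)
    (hhom : P.IsHomogeneous (homogeneousSubmodule (Fin r) k))
    (m : MonomialOrder (Fin r))
    (hrevlex : ∀ a b : Fin r →₀ ℕ, m.toSyn a < m.toSyn b ↔ RevLexLt a b)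
    (hx : (X ⟨r - 1, by omega⟩ : MvPolynomial (Fin r) k) ∉ P) :
    Ideal.Quotient.mk (m.initialIdeal P) (X ⟨r - 1, by omega⟩ : MvPolynomial (Fin r) k) ∈
        nonZeroDivisors (MvPolynomial (Fin r) k ⧸ m.initialIdeal P) ∧
      ∀ Q : Ideal (MvPolynomial (Fin r) k),
        IsAssociatedPrime Q (MvPolynomial (Fin r) k ⧸ m.initialIdeal P) →
        (X ⟨r - 1, by omega⟩ : MvPolynomial (Fin r) k) ∉ Q := by
  classical
  set x : Fin r := ⟨r - 1, by omega⟩ with hxdef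
  -- x is the largest index
  have hxmax : ∀ j : Fin r, ¬ x < j := by
    intro j hj
    have h1 : (x : ℕ) < (j : ℕ) := hj
    have h2 : (j : ℕ) < r := j.2
    simp only [hxdef] at h1
    omega
  -- sums over univ vs degree
  have hdeg : ∀ a : Fin r →₀ ℕ, (∑ i, a i) = a.degree := by
    intro a
    rw [Finsupp.degree]
    exact (Finset.sum_subset (Finset.subset_univ _)
      (fun i _ hi => Finsupp.notMem_support_iff.mp hi)).symm
  -- membership characterization of the initial ideal (monomial ideal)
  have hmemiff : ∀ p : MvPolynomial (Fin r) k, p ∈ m.initialIdeal P ↔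
      ∀ e ∈ p.support, ∃ f, (f ∈ P ∧ f ≠ 0) ∧ m.leadExp f ≤ e := by
    intro p
    rw [MonomialOrder.initialIdeal]
    have himg : ((fun f => monomial (m.leadExp f) (1 : k)) '' {f | f ∈ P ∧ f ≠ 0}) =
        ((fun s => monomial s (1 : k)) '' (m.leadExp '' {f | f ∈ P ∧ f ≠ 0})) := by
      rw [Set.image_image]
    rw [himg, MvPolynomial.mem_ideal_span_monomial_image]
    constructor
    · intro h e he
      obtain ⟨si, hsi, hle⟩ := h e he
      obtain ⟨f, hf, rfl⟩ := hsi
      exact ⟨f, hf, hle⟩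
    · intro h e he
      obtain ⟨f, hf, hle⟩ := h e he
      exact ⟨m.leadExp f, ⟨f, hf, rfl⟩, hle⟩
  -- homogeneous component with the same lead exponent
  have hcomp : ∀ f : MvPolynomial (Fin r) k, f ∈ P → f ≠ 0 →
      ∃ g, g ∈ P ∧ g ≠ 0 ∧ m.leadExp g = m.leadExp f ∧
        ∀ a ∈ g.support, a.degree = (m.leadExp f).degree := by
    intro f hfP hf0
    set d := (m.leadExp f).degree with hd
    set g := homogeneousComponent d f with hg
    have hgP : g ∈ P := by
      have h1 := hhom d hfP
      have h2 : (DirectSum.decompose (homogeneousSubmodule (Fin r) k) f d :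
          MvPolynomial (Fin r) k) = g := by
        exact MvPolynomial.decomposition.decompose'_apply f d
      rwa [h2] at h1
    have hsub : ∀ a ∈ g.support, a ∈ f.support ∧ a.degree = d := by
      intro a ha
      rw [MvPolynomial.mem_support_iff, hg, coeff_homogeneousComponent] at ha
      by_cases hcase : a.degree = d
      · rw [if_pos hcase] at ha
        exact ⟨MvPolynomial.mem_support_iff.mpr ha, hcase⟩
      · rw [if_neg hcase] at ha
        exact absurd rfl ha
    have hlf : coeff (m.leadExp f) g ≠ 0 := by
      rw [hg, coeff_homogeneousComponent, if_pos rfl]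
      exact coeff_leadExp_ne_zero m hf0
    have hg0 : g ≠ 0 := fun h => hlf (by rw [h, MvPolynomial.coeff_zero])
    have hlead : m.leadExp g = m.leadExp f := by
      apply m.toSyn.injective
      apply le_antisymm
      · rw [toSyn_leadExp]
        exact Finset.sup_le fun a ha => le_leadExp m (hsub a ha).1
      · exact le_leadExp m (MvPolynomial.mem_support_iff.mpr hlf)
    exact ⟨g, hgP, hg0, hlead, fun a ha => (hsub a ha).2⟩
  -- key step: multiplication by X x reflects membership in the initial ideal
  have hkey : ∀ g : MvPolynomial (Fin r) k, X x * g ∈ m.initialIdeal P →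
      g ∈ m.initialIdeal P := by
    intro g hXg
    rw [hmemiff]
    intro e he
    have he' : Finsupp.single x 1 + e ∈ (X x * g).support := by
      rw [MvPolynomial.mem_support_iff, MvPolynomial.coeff_X_mul]
      exact MvPolynomial.mem_support_iff.mp he
    obtain ⟨f, ⟨hfP, hf0⟩, hle⟩ := (hmemiff _).mp hXg _ he'
    have hle' : ∀ j, m.leadExp f j ≤ (Finsupp.single x 1) j + e j := by
      intro j
      have := Finsupp.le_def.mp hle j
      rwa [Finsupp.add_apply] at this
    by_cases hc : m.leadExp f x ≤ e x
    · refine ⟨f, ⟨hfP, hf0⟩, Finsupp.le_def.mpr fun j => ?_⟩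
      by_cases hj : j = x
      · rw [hj]; exact hc
      · have := hle' j
        rwa [Finsupp.single_apply, if_neg (fun h => hj h.symm), zero_add] at this
    · -- the lead monomial of f is divisible by X x
      push_neg at hc
      obtain ⟨g0, hg0P, hg00, hlead0, hhomog0⟩ := hcomp f hfP hf0
      have hx0 : ∀ a ∈ g0.support, a x ≠ 0 := by
        intro a ha hax
        have h1 : m.toSyn a ≤ m.toSyn (m.leadExp g0) := le_leadExp m ha
        have h2 : m.toSyn (m.leadExp g0) < m.toSyn a := by
          rw [hrevlex, RevLexLt]
          right
          constructor
          · rw [hdeg, hdeg, hhomog0 a ha, hlead0]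
          · refine ⟨x, ?_, fun j hj => absurd hj (hxmax j)⟩
            rw [hax, hlead0]
            omega
        exact absurd h1 (not_le.mpr h2)
      set g' := g0.divMonomial (Finsupp.single x 1) with hg'
      have heq : g0 = X x * g' := X_mul_div x hx0
      have hg'0 : g' ≠ 0 := by
        intro h
        rw [h, mul_zero] at heq
        exact hg00 heq
      have hg'P : g' ∈ P := by
        rcases hP.mem_or_mem (heq ▸ hg0P) with h | h
        · exact absurd h hx
        · exact h
      have hleadg' : Finsupp.single x 1 + m.leadExp g' = m.leadExp f := by
        rw [← hlead0, heq, leadExp_X_mul m x hg'0]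
      refine ⟨g', ⟨hg'P, hg'0⟩, Finsupp.le_def.mpr fun j => ?_⟩
      have hj1 : (Finsupp.single x 1) j + m.leadExp g' j = m.leadExp f j := by
        rw [← Finsupp.add_apply, hleadg']
      have h2 := hle' j
      by_cases hj : j = x
      · rw [hj] at hj1 h2 ⊢
        simp only [Finsupp.single_apply, if_pos rfl] at hj1 h2
        omega
      · simp only [Finsupp.single_apply, if_neg (Ne.symm hj), zero_add] at hj1 h2
        omega
  -- first part: non-zerodivisor
  have h1 : Ideal.Quotient.mk (m.initialIdeal P) (X x : MvPolynomial (Fin r) k) ∈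
      nonZeroDivisors (MvPolynomial (Fin r) k ⧸ m.initialIdeal P) := by
    rw [mem_nonZeroDivisors_iff_right]
    intro z hz
    obtain ⟨g, rfl⟩ := Ideal.Quotient.mk_surjective z
    rw [← map_mul, Ideal.Quotient.eq_zero_iff_mem] at hz
    rw [Ideal.Quotient.eq_zero_iff_mem]
    exact hkey g (by rwa [mul_comm] at hz)
  refine ⟨h1, ?_⟩
  intro Q hQ hxQ
  obtain ⟨hQp, z, hz⟩ := hQ
  obtain ⟨w, rfl⟩ := Ideal.Quotient.mk_surjective z
  set z := Ideal.Quotient.mk (m.initialIdeal P) w with hzdef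
  have hzero : ∃ n : ℕ, (X x : MvPolynomial (Fin r) k) ^ n • z = 0 := by
    rw [hz] at hxQ
    obtain ⟨n, hn⟩ := hxQ
    exact ⟨n, (Submodule.mem_bot _).mp (Submodule.mem_colon_singleton.mp hn)⟩
  have hz0 : z = 0 := by
    obtain ⟨n, hn⟩ := hzero
    have hsm : (X x : MvPolynomial (Fin r) k) ^ n • z =
        Ideal.Quotient.mk (m.initialIdeal P) (X x) ^ n * z := by rw [← map_pow]; rfl
    exact (mem_nonZeroDivisors_iff_right.mp (pow_mem h1 n)) z (by rw [mul_comm, ← hsm, hn])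
  rw [hz0] at hz
  have : Q = ⊤ := by
    rw [hz, Ideal.eq_top_iff_one]
    exact Ideal.le_radical (Submodule.mem_colon_singleton.mpr (by simp))
  exact hQp.ne_top this
end
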